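/- Suppose Γ computably embeds {A,B} into {C,D}, where C is a linear order with no infinite descending chain and D is a linear order with no infinite ascending chain. Then Γ(α) is finite for every finite linear order α. -/

import Mathlib

/-- A finite linear order: a finite piece of an atomic diagram in the language `{<}`,
with domain a finite set of naturals. -/
structure FinLO where
  dom : Finset ℕ
  rel : ℕ → ℕ → Prop
  irrefl : ∀ x ∈ dom, ¬ rel x x
  trans : ∀ x ∈ dom, ∀ y ∈ dom, ∀ z ∈ dom, rel x y → rel y z → rel x z
  total : ∀ x ∈ dom, ∀ y ∈ dom, x ≠ y → rel x y ∨ rel y x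

/-- `β` extends `α` as a finite atomic diagram. -/
def FinLO.Ext (α β : FinLO) : Prop :=
  α.dom ⊆ β.dom ∧ ∀ x ∈ α.dom, ∀ y ∈ α.dom, (α.rel x y ↔ β.rel x y)

/-- An enumeration operator on finite linear orders: it monotonically enumerates
membership facts `x ∈ Γ(α)`, positive atomic facts `x < y` and negative atomic
facts `¬ x < y`. -/
structure EnumOp where
  mem : FinLO → Set ℕ
  pos : FinLO → Set (ℕ × ℕ)
  neg : FinLO → Set (ℕ × ℕ)
  mono_mem : ∀ {α β : FinLO}, α.Ext β → mem α ⊆ mem β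
  mono_pos : ∀ {α β : FinLO}, α.Ext β → pos α ⊆ pos β
  mono_neg : ∀ {α β : FinLO}, α.Ext β → neg α ⊆ neg β

/-- The outputs of `Γ` are consistent with being part of the atomic diagram of
a linear order. -/
def EnumOp.Consistent (Γ : EnumOp) : Prop :=
  ∀ α : FinLO, (∀ x : ℕ, (x, x) ∉ Γ.pos α) ∧
    (∀ x y : ℕ, ¬ ((x, y) ∈ Γ.pos α ∧ (y, x) ∈ Γ.pos α)) ∧
    (∀ x y : ℕ, ¬ ((x, y) ∈ Γ.pos α ∧ (x, y) ∈ Γ.neg α))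

/-- `α ⊩_Γ x < y` : both `x` and `y` occur in `Γ(α)` and no extension `β ⊇ α`
has `Γ(β) ⊨ ¬ (x < y)`. -/
def EnumOp.Forces (Γ : EnumOp) (α : FinLO) (x y : ℕ) : Prop :=
  x ∈ Γ.mem α ∧ y ∈ Γ.mem α ∧ ∀ β : FinLO, α.Ext β → (x, y) ∉ Γ.neg β

/-- Every pair of distinct elements occurring in `Γ(α)` is decided by some
extension of `α`. -/
def EnumOp.Decides (Γ : EnumOp) : Prop :=
  ∀ α : FinLO, ∀ x ∈ Γ.mem α, ∀ y ∈ Γ.mem α, x ≠ y →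
    ∃ β : FinLO, α.Ext β ∧ ((x, y) ∈ Γ.pos β ∨ (x, y) ∈ Γ.neg β)

/-- A (possibly infinite) diagram in the language `{<}` with domain a set of naturals. -/
structure LinDiag where
  dom : Set ℕ
  rel : ℕ → ℕ → Prop

/-- `α` is a finite subdiagram of `L`. -/
def FinLO.SubDiag (α : FinLO) (L : LinDiag) : Prop :=
  ↑α.dom ⊆ L.dom ∧ ∀ x ∈ α.dom, ∀ y ∈ α.dom, (α.rel x y ↔ L.rel x y)

/-- Membership facts enumerated by `Γ` on the infinite diagram `L`. -/
def EnumOp.memD (Γ : EnumOp) (L : LinDiag) : Set ℕ :=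
  {x | ∃ α : FinLO, α.SubDiag L ∧ x ∈ Γ.mem α}

/-- Positive facts `x < y` enumerated by `Γ` on the infinite diagram `L`. -/
def EnumOp.posD (Γ : EnumOp) (L : LinDiag) : Set (ℕ × ℕ) :=
  {p | ∃ α : FinLO, α.SubDiag L ∧ p ∈ Γ.pos α}

/-- Negative facts `¬ x < y` enumerated by `Γ` on the infinite diagram `L`. -/
def EnumOp.negD (Γ : EnumOp) (L : LinDiag) : Set (ℕ × ℕ) :=
  {p | ∃ α : FinLO, α.SubDiag L ∧ p ∈ Γ.neg α}

/-- `L` is (the atomic diagram of) a copy of the linear order `τ`. -/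
def IsCopy (τ : Type) [LinearOrder τ] (L : LinDiag) : Prop :=
  ∃ f : τ → ℕ, Function.Injective f ∧ Set.range f = L.dom ∧
    ∀ i j : τ, (L.rel (f i) (f j) ↔ i < j)

/-- The output of `Γ` on `L` is (the atomic diagram of) a copy of the linear
order `σ`. -/
def EnumOp.OutCopy (Γ : EnumOp) (σ : Type) [LinearOrder σ] (L : LinDiag) : Prop :=
  ∃ g : σ → ℕ, Function.Injective g ∧ Γ.memD L = Set.range g ∧
    (∀ a b : σ, ((g a, g b) ∈ Γ.posD L ↔ a < b)) ∧
    (∀ a b : σ, ((g a, g b) ∈ Γ.negD L ↔ ¬ a < b))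

/-- `Γ` is a computable embedding of the pair `{A, B}` into the pair `{C, D}`:
it maps every copy of `A` to a copy of `C` and every copy of `B` to a copy of `D`. -/
def EnumOp.Embeds (Γ : EnumOp) (A B C D : Type) [LinearOrder A] [LinearOrder B]
    [LinearOrder C] [LinearOrder D] : Prop :=
  (∀ L : LinDiag, IsCopy A L → Γ.OutCopy C L) ∧
  (∀ L : LinDiag, IsCopy B L → Γ.OutCopy D L)

-- basic lemmas
lemma FinLO.Ext.trans' {a b c : FinLO} (h1 : a.Ext b) (h2 : b.Ext c) : a.Ext c :=
  ⟨h1.1.trans h2.1, fun x hx y hy => (h1.2 x hx y hy).trans (h2.2 x (h1.1 hx) y (h1.1 hy))⟩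

lemma FinLO.Ext.subDiag {a b : FinLO} {L : LinDiag} (h1 : a.Ext b) (h2 : b.SubDiag L) :
    a.SubDiag L :=
  ⟨(Finset.coe_subset.2 h1.1).trans h2.1,
   fun x hx y hy => (h1.2 x hx y hy).trans (h2.2 x (h1.1 hx) y (h1.1 hy))⟩

-- extraction of ascending sequence from infinite set
lemma exists_ascending {X : Type} [LinearOrder X]
    (hX : ¬ ∃ f : ℕ → X, StrictAnti f) {T : Set X} (hT : T.Infinite) :
    ∃ f : ℕ → X, StrictMono f ∧ ∀ n, f n ∈ T := by
  have wf : WellFounded ((· < ·) : X → X → Prop) := by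
    rw [RelEmbedding.wellFounded_iff_isEmpty]
    by_contra hne
    rw [not_isEmpty_iff] at hne
    obtain ⟨emb⟩ := hne
    exact hX ⟨emb, fun i j hij => emb.map_rel_iff.2 hij⟩
  let F : {U : Set X // U.Infinite} → {U : Set X // U.Infinite} := fun U =>
    ⟨U.1 \ {wf.min U.1 U.2.nonempty}, U.2.diff (Set.finite_singleton _)⟩
  let U : ℕ → {U : Set X // U.Infinite} := fun n => F^[n] ⟨T, hT⟩
  let f : ℕ → X := fun n => wf.min (U n).1 (U n).2.nonempty
  have hUsucc : ∀ n, (U (n+1)).1 = (U n).1 \ {f n} := by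
    intro n
    show (F^[n+1] ⟨T, hT⟩).1 = _
    rw [Function.iterate_succ_apply']
  have hmem : ∀ n, f n ∈ (U n).1 := fun n => wf.min_mem _ _
  have hstep : ∀ n, f n < f (n+1) := by
    intro n
    have h1 : f (n+1) ∈ (U n).1 \ {f n} := by rw [← hUsucc]; exact hmem (n+1)
    have h2 : ¬ f (n+1) < f n := wf.not_lt_min _ h1.1
    have h3 : f (n+1) ≠ f n := h1.2
    exact lt_of_le_of_ne (not_lt.1 h2) (Ne.symm h3)
  have hsub : ∀ n, (U n).1 ⊆ T := by
    intro n
    induction n with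
    | zero => exact subset_rfl
    | succ k ih => rw [hUsucc]; exact (Set.diff_subset).trans ih
  exact ⟨f, strictMono_nat_of_lt_succ hstep, fun n => hsub n (hmem n)⟩

attribute [local instance] Classical.propDecidable

noncomputable def FinLO.rk (β : FinLO) (x : ℕ) : ℕ :=
  (β.dom.filter fun w => β.rel w x).card

lemma FinLO.rk_lt (β : FinLO) {x : ℕ} (hx : x ∈ β.dom) : β.rk x < β.dom.card := by
  apply Finset.card_lt_card
  rw [Finset.ssubset_iff_of_subset (Finset.filter_subset _ _)]
  exact ⟨x, hx, fun hmem => β.irrefl x hx (Finset.mem_filter.1 hmem).2⟩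

lemma FinLO.rk_mono (β : FinLO) {x y : ℕ} (hx : x ∈ β.dom) (hy : y ∈ β.dom)
    (h : β.rel x y) : β.rk x < β.rk y := by
  apply Finset.card_lt_card
  constructor
  · intro w hw
    rw [Finset.mem_filter] at *
    exact ⟨hw.1, β.trans w hw.1 x hx y hy hw.2 h⟩
  · intro hcontra
    have := hcontra (Finset.mem_filter.2 ⟨hx, h⟩)
    exact β.irrefl x hx (Finset.mem_filter.1 this).2

lemma FinLO.rk_iff (β : FinLO) {x y : ℕ} (hx : x ∈ β.dom) (hy : y ∈ β.dom) :
    β.rel x y ↔ β.rk x < β.rk y := by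
  refine ⟨β.rk_mono hx hy, fun h => ?_⟩
  by_contra hrel
  rcases eq_or_ne x y with rfl | hne
  · exact lt_irrefl _ h
  · rcases β.total x hx y hy hne with h' | h'
    · exact hrel h'
    · exact absurd h (not_lt.2 (le_of_lt (β.rk_mono hy hx h')))

lemma FinLO.rk_injOn (β : FinLO) {x y : ℕ} (hx : x ∈ β.dom) (hy : y ∈ β.dom)
    (h : β.rk x = β.rk y) : x = y := by
  by_contra hne
  rcases β.total x hx y hy hne with h' | h'
  · exact absurd h (ne_of_lt (β.rk_mono hx hy h'))
  · exact absurd h.symm (ne_of_lt (β.rk_mono hy hx h'))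

lemma exists_copy (τ : Type) [LinearOrder τ] [Countable τ] [Infinite τ]
    (β : FinLO) (u : ℕ → ℕ) (hu : Function.Injective u) (hud : ∀ k, u k ∉ β.dom) :
    ∃ L : LinDiag, IsCopy τ L ∧ β.SubDiag L ∧ ∀ x ∈ L.dom, x ∈ β.dom ∨ ∃ k, x = u k := by
  classical
  obtain ⟨enc, henc⟩ := exists_injective_nat τ
  obtain ⟨s, hs⟩ := Infinite.exists_subset_card_eq τ β.dom.card
  set n := β.dom.card with hn
  -- the rank map as a bijection onto Fin n
  let ρ : {x // x ∈ β.dom} → Fin n := fun a => ⟨β.rk a.1, β.rk_lt a.2⟩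
  have hρinj : Function.Injective ρ := by
    intro a b hab
    exact Subtype.ext (β.rk_injOn a.2 b.2 (congrArg Fin.val hab))
  have hρbij : Function.Bijective ρ := by
    have hc : Fintype.card {x // x ∈ β.dom} = Fintype.card (Fin n) := by
      rw [Fintype.card_coe, Fintype.card_fin]
    exact (Fintype.bijective_iff_injective_and_card ρ).2 ⟨hρinj, hc⟩
  let ρe : {x // x ∈ β.dom} ≃ Fin n := Equiv.ofBijective ρ hρbij
  let χ : Fin n ≃o {x // x ∈ s} := s.orderIsoOfFin hs
  let f : τ → ℕ := fun a => if h : a ∈ s then (ρe.symm (χ.symm ⟨a, h⟩) : ℕ) else u (enc a)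
  have hfs : ∀ a (h : a ∈ s), f a = (ρe.symm (χ.symm ⟨a, h⟩) : ℕ) := fun a h => dif_pos h
  have hfns : ∀ a, a ∉ s → f a = u (enc a) := fun a h => dif_neg h
  have hfdom : ∀ a (h : a ∈ s), f a ∈ β.dom := fun a h => by
    rw [hfs a h]; exact (ρe.symm (χ.symm ⟨a, h⟩)).2
  have hinj : Function.Injective f := by
    intro a b hab
    by_cases ha : a ∈ s <;> by_cases hb : b ∈ s
    · rw [hfs a ha, hfs b hb] at hab
      have h1 : ρe.symm (χ.symm ⟨a, ha⟩) = ρe.symm (χ.symm ⟨b, hb⟩) := Subtype.ext hab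
      have h2 : (⟨a, ha⟩ : {x // x ∈ s}) = ⟨b, hb⟩ := χ.symm.injective (ρe.symm.injective h1)
      exact congrArg Subtype.val h2
    · rw [hfns b hb] at hab; exact absurd (hab ▸ hfdom a ha) (hud (enc b))
    · rw [hfns a ha] at hab; exact absurd (hab ▸ hfdom b hb) (hud (enc a))
    · rw [hfns a ha, hfns b hb] at hab
      exact henc (hu hab)
  -- the inverse on β.dom : for x ∈ β.dom, the τ-element mapping to it
  have hback : ∀ (x : ℕ) (hx : x ∈ β.dom), ∃ (i : τ) (hi : i ∈ s),
      f i = x ∧ χ.symm ⟨i, hi⟩ = ρe ⟨x, hx⟩ := by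
    intro x hx
    refine ⟨(χ (ρe ⟨x, hx⟩)).1, (χ (ρe ⟨x, hx⟩)).2, ?_, ?_⟩
    · rw [hfs _ (χ (ρe ⟨x, hx⟩)).2]
      have : (⟨(χ (ρe ⟨x, hx⟩)).1, (χ (ρe ⟨x, hx⟩)).2⟩ : {x // x ∈ s}) = χ (ρe ⟨x, hx⟩) :=
        Subtype.coe_eta _ _
      rw [this, OrderIso.symm_apply_apply, Equiv.symm_apply_apply]
    · have : (⟨(χ (ρe ⟨x, hx⟩)).1, (χ (ρe ⟨x, hx⟩)).2⟩ : {x // x ∈ s}) = χ (ρe ⟨x, hx⟩) :=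
        Subtype.coe_eta _ _
      rw [this, OrderIso.symm_apply_apply]
  refine ⟨⟨Set.range f, fun x y => ∃ i j : τ, f i = x ∧ f j = y ∧ i < j⟩,
    ⟨f, hinj, rfl, ?_⟩, ⟨?_, ?_⟩, ?_⟩
  · intro i j
    constructor
    · rintro ⟨i', j', h1, h2, h3⟩
      rwa [hinj h1, hinj h2] at h3
    · intro h; exact ⟨i, j, rfl, rfl, h⟩
  · -- β.dom ⊆ range f
    intro x hx
    have hx' : x ∈ β.dom := hx
    obtain ⟨i, hi, hfi, -⟩ := hback x hx'
    exact ⟨i, hfi⟩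
  · -- rel agreement on β.dom
    intro x hx y hy
    obtain ⟨i, hi, hfi, hχi⟩ := hback x hx
    obtain ⟨j, hj, hfj, hχj⟩ := hback y hy
    have hordkey : β.rel x y ↔ i < j := by
      rw [β.rk_iff hx hy]
      have h1 : β.rk x = (ρe ⟨x, hx⟩ : Fin n).1 := rfl
      have h2 : β.rk y = (ρe ⟨y, hy⟩ : Fin n).1 := rfl
      rw [h1, h2, ← hχi, ← hχj]
      have : χ.symm ⟨i, hi⟩ < χ.symm ⟨j, hj⟩ ↔ (⟨i, hi⟩ : {x // x ∈ s}) < ⟨j, hj⟩ :=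
        χ.symm.lt_iff_lt
      rw [show ((χ.symm ⟨i, hi⟩ : Fin n).1 < (χ.symm ⟨j, hj⟩ : Fin n).1 ↔
          χ.symm ⟨i, hi⟩ < χ.symm ⟨j, hj⟩) from Iff.rfl, this, Subtype.mk_lt_mk]
    constructor
    · intro hrel
      exact ⟨i, j, hfi, hfj, hordkey.1 hrel⟩
    · rintro ⟨i', j', h1, h2, h3⟩
      have hi' : i' ∈ s := by
        by_contra hns
        rw [hfns i' hns] at h1
        exact hud (enc i') (h1 ▸ hx)
      have hj' : j' ∈ s := by
        by_contra hns
        rw [hfns j' hns] at h2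
        exact hud (enc j') (h2 ▸ hy)
      have : i' = i := hinj (by rw [h1, hfi])
      have h4 : j' = j := hinj (by rw [h2, hfj])
      exact hordkey.2 (by rw [← this, ← h4]; exact h3)
  · -- freshness
    rintro x ⟨a, rfl⟩
    by_cases h : a ∈ s
    · exact Or.inl (hfdom a h)
    · exact Or.inr ⟨enc a, hfns a h⟩

lemma amalg (α β1 β2 : FinLO) (h1 : α.Ext β1) (h2 : α.Ext β2)
    (hcap : ∀ x, x ∈ β1.dom → x ∈ β2.dom → x ∈ α.dom) :
    ∃ γ : FinLO, β1.Ext γ ∧ β2.Ext γ := by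
  classical
  set N := β2.dom.card with hN
  let m : ℕ → ℕ := fun z => ((β1.dom ∩ β2.dom).filter fun k => β2.rel k z).sup fun k => β1.rk k + 1
  let e : ℕ → ℚ := fun x => if x ∈ β1.dom then ((β1.rk x : ℚ) + 1)
    else (m x : ℚ) + ((β2.rk x : ℚ) + 1)/(N + 2)
  have hfrac0 : ∀ z : ℕ, (0:ℚ) < ((β2.rk z : ℚ) + 1)/(N + 2) := by
    intro z; positivity
  have hfrac1 : ∀ z ∈ β2.dom, ((β2.rk z : ℚ) + 1)/(N + 2) < 1 := by
    intro z hz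
    rw [div_lt_one (by positivity)]
    have := β2.rk_lt hz
    exact_mod_cast by linarith [(Nat.cast_lt (α := ℚ)).2 this]
  have htrans12 : ∀ x y, x ∈ β1.dom → x ∈ β2.dom → y ∈ β1.dom → y ∈ β2.dom →
      (β2.rel x y ↔ β1.rel x y) := by
    intro x y hx1 hx2 hy1 hy2
    have hxa := hcap x hx1 hx2
    have hya := hcap y hy1 hy2
    rw [← h2.2 x hxa y hya, h1.2 x hxa y hya]
  have he1 : ∀ x ∈ β1.dom, e x = (β1.rk x : ℚ) + 1 := fun x hx => if_pos hx
  have he2 : ∀ x, x ∉ β1.dom → e x = (m x : ℚ) + ((β2.rk x : ℚ) + 1)/(N + 2) :=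
    fun x hx => if_neg hx
  have claim : ∀ x y, ((x ∈ β1.dom ∧ y ∈ β1.dom ∧ β1.rel x y) ∨
      (x ∈ β2.dom ∧ y ∈ β2.dom ∧ β2.rel x y)) → e x < e y := by
    rintro x y (⟨hx, hy, hrel⟩ | ⟨hx, hy, hrel⟩)
    · rw [he1 x hx, he1 y hy]
      have := β1.rk_mono hx hy hrel
      have : (β1.rk x : ℚ) < β1.rk y := by exact_mod_cast this
      linarith
    · by_cases hx1 : x ∈ β1.dom <;> by_cases hy1 : y ∈ β1.dom
      · -- both in β1 : transfer
        rw [he1 x hx1, he1 y hy1]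
        have := β1.rk_mono hx1 hy1 ((htrans12 x y hx1 hx hy1 hy).1 hrel)
        have : (β1.rk x : ℚ) < β1.rk y := by exact_mod_cast this
        linarith
      · -- x in β1 ∩ β2, y new
        rw [he1 x hx1, he2 y hy1]
        have hmem : x ∈ (β1.dom ∩ β2.dom).filter fun k => β2.rel k y :=
          Finset.mem_filter.2 ⟨Finset.mem_inter.2 ⟨hx1, hx⟩, hrel⟩
        have hle : β1.rk x + 1 ≤ m y := Finset.le_sup (f := fun k => β1.rk k + 1) hmem
        have hle' : (β1.rk x : ℚ) + 1 ≤ m y := by exact_mod_cast hle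
        linarith [hfrac0 y]
      · -- x new, y in β1 ∩ β2
        rw [he2 x hx1, he1 y hy1]
        have hle : m x ≤ β1.rk y := by
          apply Finset.sup_le
          intro k hk
          obtain ⟨hk', hkrel⟩ := Finset.mem_filter.1 hk
          obtain ⟨hk1, hk2⟩ := Finset.mem_inter.1 hk'
          have hky : β2.rel k y := β2.trans k hk2 x hx y hy hkrel hrel
          have : β1.rel k y := (htrans12 k y hk1 hk2 hy1 hy).1 hky
          exact Nat.succ_le_of_lt (β1.rk_mono hk1 hy1 this)
        have hle' : (m x : ℚ) ≤ β1.rk y := by exact_mod_cast hle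
        linarith [hfrac1 x hx]
      · -- both new
        rw [he2 x hx1, he2 y hy1]
        have hm : m x ≤ m y := by
          apply Finset.sup_le
          intro k hk
          obtain ⟨hk', hkrel⟩ := Finset.mem_filter.1 hk
          obtain ⟨hk1, hk2⟩ := Finset.mem_inter.1 hk'
          have hky : β2.rel k y := β2.trans k hk2 x hx y hy hkrel hrel
          exact Finset.le_sup (f := fun k => β1.rk k + 1) (Finset.mem_filter.2 ⟨hk', hky⟩)
        have hm' : (m x : ℚ) ≤ m y := by exact_mod_cast hm
        have hr : β2.rk x < β2.rk y := β2.rk_mono hx hy hrel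
        have hr' : (β2.rk x : ℚ) + 1 < (β2.rk y : ℚ) + 1 := by
          have : (β2.rk x : ℚ) < β2.rk y := by exact_mod_cast hr
          linarith
        have hdiv : ((β2.rk x : ℚ) + 1)/(N+2) < ((β2.rk y : ℚ) + 1)/(N+2) := by
          gcongr
        linarith
  -- mixed incomparable case: x only in β1, y only in β2
  have hmixed : ∀ x y, x ∈ β1.dom → x ∉ β2.dom → y ∈ β2.dom → y ∉ β1.dom →
      e x < e y ∨ e y < e x := by
    intro x y hx1 hx2 hy2 hy1
    rw [he1 x hx1, he2 y hy1]
    rcases le_or_gt (β1.rk x + 1) (m y) with h | h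
    · left
      have h' : (β1.rk x : ℚ) + 1 ≤ m y := by exact_mod_cast h
      linarith [hfrac0 y]
    · right
      have h' : m y + 1 ≤ β1.rk x + 1 := h
      have h'' : (m y : ℚ) + 1 ≤ (β1.rk x : ℚ) + 1 := by exact_mod_cast h'
      linarith [hfrac1 y hy2]
  let γ : FinLO :=
    { dom := β1.dom ∪ β2.dom
      rel := fun x y => x ∈ β1.dom ∪ β2.dom ∧ y ∈ β1.dom ∪ β2.dom ∧ e x < e y
      irrefl := fun x _ h => lt_irrefl _ h.2.2
      trans := fun x _ y _ z _ h h' => ⟨h.1, h'.2.1, lt_trans h.2.2 h'.2.2⟩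
      total := by
        intro x hx y hy hne
        have key : e x < e y ∨ e y < e x := by
          by_cases hx1 : x ∈ β1.dom <;> by_cases hy1 : y ∈ β1.dom
          · rcases β1.total x hx1 y hy1 hne with h | h
            · exact Or.inl (claim x y (Or.inl ⟨hx1, hy1, h⟩))
            · exact Or.inr (claim y x (Or.inl ⟨hy1, hx1, h⟩))
          · have hy2 : y ∈ β2.dom := (Finset.mem_union.1 hy).resolve_left hy1
            by_cases hx2 : x ∈ β2.dom
            · rcases β2.total x hx2 y hy2 hne with h | h
              · exact Or.inl (claim x y (Or.inr ⟨hx2, hy2, h⟩))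
              · exact Or.inr (claim y x (Or.inr ⟨hy2, hx2, h⟩))
            · exact hmixed x y hx1 hx2 hy2 hy1
          · have hx2 : x ∈ β2.dom := (Finset.mem_union.1 hx).resolve_left hx1
            by_cases hy2 : y ∈ β2.dom
            · rcases β2.total x hx2 y hy2 hne with h | h
              · exact Or.inl (claim x y (Or.inr ⟨hx2, hy2, h⟩))
              · exact Or.inr (claim y x (Or.inr ⟨hy2, hx2, h⟩))
            · exact (hmixed y x hy1 hy2 hx2 hx1).symm
          · have hx2 : x ∈ β2.dom := (Finset.mem_union.1 hx).resolve_left hx1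
            have hy2 : y ∈ β2.dom := (Finset.mem_union.1 hy).resolve_left hy1
            rcases β2.total x hx2 y hy2 hne with h | h
            · exact Or.inl (claim x y (Or.inr ⟨hx2, hy2, h⟩))
            · exact Or.inr (claim y x (Or.inr ⟨hy2, hx2, h⟩))
        rcases key with h | h
        · exact Or.inl ⟨hx, hy, h⟩
        · exact Or.inr ⟨hy, hx, h⟩ }
  refine ⟨γ, ⟨Finset.subset_union_left, ?_⟩, ⟨Finset.subset_union_right, ?_⟩⟩
  · intro x hx y hy
    constructor
    · intro h
      exact ⟨Finset.mem_union_left _ hx, Finset.mem_union_left _ hy,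
        claim x y (Or.inl ⟨hx, hy, h⟩)⟩
    · rintro ⟨-, -, h⟩
      have hne : x ≠ y := by rintro rfl; exact lt_irrefl _ h
      rcases β1.total x hx y hy hne with h' | h'
      · exact h'
      · exact absurd h (not_lt.2 (le_of_lt (claim y x (Or.inl ⟨hy, hx, h'⟩))))
  · intro x hx y hy
    constructor
    · intro h
      exact ⟨Finset.mem_union_right _ hx, Finset.mem_union_right _ hy,
        claim x y (Or.inr ⟨hx, hy, h⟩)⟩
    · rintro ⟨-, -, h⟩
      have hne : x ≠ y := by rintro rfl; exact lt_irrefl _ h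
      rcases β2.total x hx y hy hne with h' | h'
      · exact h'
      · exact absurd h (not_lt.2 (le_of_lt (claim y x (Or.inr ⟨hy, hx, h'⟩))))

lemma exists_descending {X : Type} [LinearOrder X]
    (hX : ¬ ∃ f : ℕ → X, StrictMono f) {T : Set X} (hT : T.Infinite) :
    ∃ f : ℕ → X, StrictAnti f ∧ ∀ n, f n ∈ T := by
  have hX' : ¬ ∃ f : ℕ → Xᵒᵈ, StrictAnti f := by
    rintro ⟨f, hf⟩
    exact hX ⟨fun n => OrderDual.ofDual (f n), fun i j hij => hf hij⟩
  obtain ⟨f, hf, hmem⟩ := exists_ascending (X := Xᵒᵈ) hX' (T := (T : Set Xᵒᵈ)) hT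
  exact ⟨fun n => OrderDual.ofDual (f n), fun i j hij => hf hij, hmem⟩

lemma restrictFin {τ : Type} [LinearOrder τ] {L : LinDiag} (hL : IsCopy τ L)
    (s : Finset ℕ) (hs : ↑s ⊆ L.dom) :
    ∃ δ : FinLO, δ.dom = s ∧ δ.SubDiag L := by
  obtain ⟨f, hfinj, hfrange, hford⟩ := hL
  have hmem : ∀ x ∈ s, ∃ i : τ, f i = x := by
    intro x hx
    have : x ∈ L.dom := hs hx
    rw [← hfrange] at this
    exact this
  refine ⟨⟨s, fun x y => x ∈ s ∧ y ∈ s ∧ L.rel x y, ?_, ?_, ?_⟩, rfl, ?_, ?_⟩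
  · intro x hx h
    obtain ⟨i, rfl⟩ := hmem x hx
    exact lt_irrefl i ((hford i i).1 h.2.2)
  · intro x hx y hy z hz h h'
    obtain ⟨i, rfl⟩ := hmem x hx
    obtain ⟨j, rfl⟩ := hmem y hy
    obtain ⟨k, rfl⟩ := hmem z hz
    exact ⟨hx, hz, (hford i k).2 (lt_trans ((hford i j).1 h.2.2) ((hford j k).1 h'.2.2))⟩
  · intro x hx y hy hne
    obtain ⟨i, rfl⟩ := hmem x hx
    obtain ⟨j, rfl⟩ := hmem y hy
    have hij : i ≠ j := fun h => hne (congrArg f h)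
    rcases lt_or_gt_of_ne hij with h | h
    · exact Or.inl ⟨hx, hy, (hford i j).2 h⟩
    · exact Or.inr ⟨hy, hx, (hford j i).2 h⟩
  · exact hs
  · intro x hx y hy
    exact ⟨fun h => h.2.2, fun h => ⟨hx, hy, h⟩⟩

lemma subDiag_ext {β δ : FinLO} {L : LinDiag} (hβ : β.SubDiag L) (hδ : δ.SubDiag L)
    (h : β.dom ⊆ δ.dom) : β.Ext δ :=
  ⟨h, fun x hx y hy => (hβ.2 x hx y hy).trans ((hδ.2 x (h hx) y (h hy)).symm)⟩

/-- if `Γ` computably embeds `{A, B}` into `{C, D}`, where `C` has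
no infinite descending chain and `D` has no infinite ascending chain, then
`Γ(α)` is finite for every finite linear order `α`. -/
theorem gamma_finite_on_conditions (A B C D : Type) [LinearOrder A] [LinearOrder B]
    [LinearOrder C] [LinearOrder D] [Countable A] [Countable B] [Infinite A] [Infinite B]
    (Γ : EnumOp) (hΓ : Γ.Embeds A B C D)
    (hC : ¬ ∃ f : ℕ → C, StrictAnti f) (hD : ¬ ∃ f : ℕ → D, StrictMono f) :
    ∀ α : FinLO, (Γ.mem α).Finite := by
  intro α
  by_contra hfin
  have hSinf : (Γ.mem α).Infinite := hfin
  set S := Γ.mem α with hS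
  set M := (α.dom.sup id) + 1 with hMdef
  have hM : ∀ x ∈ α.dom, x < M := fun x hx =>
    Nat.lt_succ_of_le (Finset.le_sup (f := id) hx)
  -- copy of B extending α with even fresh elements
  obtain ⟨LB, hcopyB, hsubB, hfreshB⟩ := exists_copy B α (fun k => M + 2*k)
    (fun a b hab => by simp only [] at hab; omega)
    (fun k hk => by have := hM _ hk; omega)
  obtain ⟨h, hinj, hmemD, hposD, hnegD⟩ := hΓ.2 LB hcopyB
  have hSsubB : S ⊆ Γ.memD LB := fun x hx => ⟨α, hsubB, hx⟩
  have hSrange : S ⊆ Set.range h := by rw [← hmemD]; exact hSsubB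
  have hTinf : (h ⁻¹' S).Infinite := by
    intro hTfin
    apply hSinf
    apply (hTfin.image h).subset
    intro x hx
    obtain ⟨d0, rfl⟩ := hSrange hx
    exact ⟨d0, hx, rfl⟩
  obtain ⟨d, hd, hdT⟩ := exists_descending hD hTinf
  set y : ℕ → ℕ := fun n => h (d n) with hy
  have hyS : ∀ n, y n ∈ S := fun n => hdT n
  have hyinj : Function.Injective y := fun a b hab => hd.injective (hinj hab)
  have hposB : ∀ i j, i < j → (y j, y i) ∈ Γ.posD LB :=
    fun i j hij => (hposD (d j) (d i)).2 (hd hij)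
  -- copy of A extending α with odd fresh elements
  obtain ⟨LA, hcopyA, hsubA, hfreshA⟩ := exists_copy A α (fun k => M + 2*k + 1)
    (fun a b hab => by simp only [] at hab; omega)
    (fun k hk => by have := hM _ hk; omega)
  obtain ⟨g, hginj, hgmemD, hgposD, hgnegD⟩ := hΓ.1 LA hcopyA
  have hSsubA : S ⊆ Γ.memD LA := fun x hx => ⟨α, hsubA, hx⟩
  have hyrange : ∀ n, y n ∈ Set.range g := fun n => by
    rw [← hgmemD]; exact hSsubA (hyS n)
  choose c hc using hyrange
  have hcnanti : ¬ StrictAnti c := fun hcanti => hC ⟨c, hcanti⟩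
  have hex : ∃ i j, i < j ∧ ¬ c j < c i := by
    by_contra hcon
    push_neg at hcon
    exact hcnanti fun i j hij => hcon i j hij
  obtain ⟨i, j, hij, hnot⟩ := hex
  have hcne : c i ≠ c j := fun hceq => hyinj.ne hij.ne (by rw [← hc i, ← hc j, hceq])
  have hcij : c i < c j := lt_of_le_of_ne (not_lt.1 hnot) hcne
  have hposA : (y i, y j) ∈ Γ.posD LA := by
    rw [← hc i, ← hc j]
    exact (hgposD (c i) (c j)).2 hcij
  -- finite witnesses, enlarged to contain α
  obtain ⟨β1', hβ1sub, hβ1pos⟩ := hposA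
  obtain ⟨β2', hβ2sub, hβ2pos⟩ := hposB i j hij
  obtain ⟨β1, hβ1dom, hβ1L⟩ := restrictFin hcopyA (β1'.dom ∪ α.dom)
    (by rw [Finset.coe_union]; exact Set.union_subset hβ1sub.1 hsubA.1)
  obtain ⟨β2, hβ2dom, hβ2L⟩ := restrictFin hcopyB (β2'.dom ∪ α.dom)
    (by rw [Finset.coe_union]; exact Set.union_subset hβ2sub.1 hsubB.1)
  have hβ1ext : β1'.Ext β1 := subDiag_ext hβ1sub hβ1L
    (by rw [hβ1dom]; exact Finset.subset_union_left)
  have hαβ1 : α.Ext β1 := subDiag_ext hsubA hβ1L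
    (by rw [hβ1dom]; exact Finset.subset_union_right)
  have hβ2ext : β2'.Ext β2 := subDiag_ext hβ2sub hβ2L
    (by rw [hβ2dom]; exact Finset.subset_union_left)
  have hαβ2 : α.Ext β2 := subDiag_ext hsubB hβ2L
    (by rw [hβ2dom]; exact Finset.subset_union_right)
  have hp1 : (y i, y j) ∈ Γ.pos β1 := Γ.mono_pos hβ1ext hβ1pos
  have hp2 : (y j, y i) ∈ Γ.pos β2 := Γ.mono_pos hβ2ext hβ2pos
  -- disjointness of the two witnesses outside α
  have hcap : ∀ x, x ∈ β1.dom → x ∈ β2.dom → x ∈ α.dom := by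
    intro x hx1 hx2
    have hxA : x ∈ LA.dom := hβ1L.1 hx1
    have hxB : x ∈ LB.dom := hβ2L.1 hx2
    rcases hfreshA x hxA with hmem | ⟨k, rfl⟩
    · exact hmem
    · rcases hfreshB _ hxB with hmem | ⟨k', hk'⟩
      · exact hmem
      · omega
  obtain ⟨γ, hγ1, hγ2⟩ := amalg α β1 β2 hαβ1 hαβ2 hcap
  have hp1' : (y i, y j) ∈ Γ.pos γ := Γ.mono_pos hγ1 hp1
  have hp2' : (y j, y i) ∈ Γ.pos γ := Γ.mono_pos hγ2 hp2
  -- extend the amalgam to a copy of A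
  obtain ⟨Lf, hcopyf, hsubf, -⟩ := exists_copy A γ (fun k => (γ.dom.sup id) + 1 + k)
    (fun a b hab => by simp only [] at hab; omega)
    (fun k hk => by
      have : (γ.dom.sup id) + 1 + k ≤ γ.dom.sup id := Finset.le_sup (f := id) hk
      omega)
  obtain ⟨g2, hg2inj, hg2mem, hg2pos, -⟩ := hΓ.1 Lf hcopyf
  have hαf : α.SubDiag Lf := (hαβ1.trans' hγ1).subDiag hsubf
  have hyi : y i ∈ Set.range g2 := by rw [← hg2mem]; exact ⟨α, hαf, hyS i⟩
  have hyj : y j ∈ Set.range g2 := by rw [← hg2mem]; exact ⟨α, hαf, hyS j⟩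
  obtain ⟨a, ha⟩ := hyi
  obtain ⟨b, hb⟩ := hyj
  have hab : a < b := (hg2pos a b).1 (by rw [ha, hb]; exact ⟨γ, hsubf, hp1'⟩)
  have hba : b < a := (hg2pos b a).1 (by rw [ha, hb]; exact ⟨γ, hsubf, hp2'⟩)
  exact absurd hab (not_lt.2 hba.le)
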